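/- arXiv:2209.14524 — 3 statements merged into one kernel-verified Lean document; each statement's English description precedes it below -/
import Mathlib

section
/- There exists a function g : ℕ³ → ℕ such that the following holds for all positive integers s, t, q. If M is a matroid with the (s,2s,t,2t)-property, r(M) ≥ r*(M), and |E(M)| ≥ g(s,t,q), then M has s−1 pairwise disjoint 2t-element cocircuits C*_1, …, C*_{s−1}, and there is a set Z ⊆ E(M) − ⋃_{i∈[s−1]} C*_i such that (1) r_M(Z) ≥ q, and (2) for each z ∈ Z there exists z' ∈ Z − {z} such that {z,z'} is contained in a 2s-element circuit C of M with |C ∩ C*_i| = 2 for each i ∈ [s−1]. -/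
open Set Function

namespace Matroid

variable {α : Type*}

/-- A circuit of a matroid: a minimal dependent set. -/
def IsCircuit' (M : Matroid α) (C : Set α) : Prop := Minimal M.Dep C

/-- A cocircuit of a matroid: a circuit of the dual matroid. -/
def IsCocircuit' (M : Matroid α) (C : Set α) : Prop := M✶.IsCircuit' C

/-- The `ℕ`-valued rank of a set `X` in a matroid `M`:
the size of a largest independent subset of `X`. -/
noncomputable def rk' (M : Matroid α) (X : Set α) : ℕ :=
  sSup {n : ℕ | ∃ I, M.Indep I ∧ I ⊆ X ∧ I.ncard = n}

/-- The connectivity function `λ(X) = r(X) + r(E − X) − r(M)`. -/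
noncomputable def lam' (M : Matroid α) (X : Set α) : ℕ :=
  M.rk' X + M.rk' (M.E \ X) - M.rk' M.E

/-- The `(s,u,t,v)`-property: every `s`-element subset of the ground set is contained in a
circuit of size `u`, and every `t`-element subset is contained in a cocircuit of size `v`. -/
def HasProp (M : Matroid α) (s u t v : ℕ) : Prop :=
  (∀ S ⊆ M.E, S.ncard = s → ∃ C, M.IsCircuit' C ∧ C.ncard = u ∧ S ⊆ C) ∧
  (∀ T ⊆ M.E, T.ncard = t → ∃ C, M.IsCocircuit' C ∧ C.ncard = v ∧ T ⊆ C)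

/-- A `t`-echidna of order `n`: a family of `n` pairwise disjoint `2`-element subsets of the
ground set (spines) such that the union of any `t` spines is a circuit.
(A `t`-coechidna of `M` is a `t`-echidna of `M✶`.) -/
def IsEchidna (M : Matroid α) (t : ℕ) {n : ℕ} (S : Fin n → Set α) : Prop :=
  (∀ i, S i ⊆ M.E) ∧ (∀ i, (S i).ncard = 2) ∧
  Pairwise (Function.onFun Disjoint S) ∧
  ∀ I : Finset (Fin n), I.card = t → M.IsCircuit' (⋃ i ∈ I, S i)

/-- `M` is an `(s,t)`-spike with associated partition `(A 1, …, A m)`: the `A i` are `m`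
pairwise disjoint pairs partitioning the ground set, with `m ≥ max s t`, such that the union of
any `s` pairs is a circuit and the union of any `t` pairs is a cocircuit. -/
def IsSpike (M : Matroid α) (s t : ℕ) {m : ℕ} (A : Fin m → Set α) : Prop :=
  max s t ≤ m ∧ (⋃ i, A i) = M.E ∧
  Pairwise (Function.onFun Disjoint A) ∧ (∀ i, (A i).ncard = 2) ∧
  (∀ I : Finset (Fin m), I.card = s → M.IsCircuit' (⋃ i ∈ I, A i)) ∧
  (∀ I : Finset (Fin m), I.card = t → M.IsCocircuit' (⋃ i ∈ I, A i))

end Matroid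

namespace Matroid

variable {α : Type*}

section CircBasic

variable {M : Matroid α} {C C' D X Y : Set α} {e f : α}

lemma IsCircuit'.dep (h : M.IsCircuit' C) : M.Dep C := h.prop

lemma IsCircuit'.subset_ground (h : M.IsCircuit' C) : C ⊆ M.E := h.prop.subset_ground

lemma IsCircuit'.nonempty (h : M.IsCircuit' C) : C.Nonempty := h.prop.nonempty

lemma IsCircuit'.finite (h : M.IsCircuit' C) (hE : M.E.Finite) : C.Finite :=
  hE.subset h.subset_ground

lemma IsCircuit'.ssubset_indep (h : M.IsCircuit' C) (hXC : X ⊂ C) : M.Indep X := by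
  by_contra hX
  have hdep : M.Dep X := dep_of_not_indep hX (hXC.subset.trans h.subset_ground)
  exact hXC.ne (subset_antisymm hXC.subset (h.2 hdep hXC.subset))

lemma IsCircuit'.diff_singleton_indep (h : M.IsCircuit' C) (he : e ∈ C) :
    M.Indep (C \ {e}) :=
  h.ssubset_indep (sdiff_singleton_ssubset.2 he)

lemma IsCircuit'.eq_of_subset_circuit (h : M.IsCircuit' C) (h' : M.IsCircuit' C')
    (hCC' : C ⊆ C') : C = C' :=
  subset_antisymm hCC' (h'.2 h.prop hCC')

lemma IsCircuit'.mem_closure_diff_singleton (h : M.IsCircuit' C) (he : e ∈ C) :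
    e ∈ M.closure (C \ {e}) := by
  have hi := h.diff_singleton_indep he
  have hd : M.Dep (insert e (C \ {e})) := by
    rw [insert_diff_singleton, insert_eq_of_mem he]; exact h.dep
  exact (hi.insert_dep_iff.1 hd).1

/-- every finite dependent set contains a circuit -/
lemma Dep.exists_circuit_subset (hX : M.Dep X) (hfin : X.Finite) :
    ∃ C ⊆ X, M.IsCircuit' C := by
  obtain ⟨C, ⟨hCX, hCdep⟩, hmin⟩ := Set.Finite.exists_minimal
    (s := {Y | Y ⊆ X ∧ M.Dep Y}) (hfin.finite_subsets.subset (fun Y hY => hY.1))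
    ⟨X, Subset.rfl, hX⟩
  exact ⟨C, hCX, hCdep, fun Y hY hYC => hmin ⟨hYC.trans hCX, hY⟩ hYC⟩

/-- an element of the closure of an indep-spanned finite set yields a circuit through it -/
lemma exists_circuit_of_mem_closure (hf : f ∈ M.closure X) (hfX : f ∉ X)
    (hXE : X ⊆ M.E) (hfin : X.Finite) : ∃ C, M.IsCircuit' C ∧ f ∈ C ∧ C ⊆ insert f X := by
  obtain ⟨I, hI⟩ := M.exists_isBasis X hXE
  have hfI : f ∈ M.closure I := by rwa [hI.closure_eq_closure]
  have hfI' : f ∉ I := fun h => hfX (hI.subset h)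
  have hdep : M.Dep (insert f I) := hI.indep.insert_dep_iff.2 ⟨hfI, hfI'⟩
  obtain ⟨C, hCsub, hC⟩ := hdep.exists_circuit_subset ((hfin.subset hI.subset).insert f)
  refine ⟨C, hC, ?_, hCsub.trans (insert_subset_insert hI.subset)⟩
  by_contra hfC
  exact hC.dep.not_indep (hI.indep.subset (by
    intro x hx; rcases hCsub hx with h | h
    · exact absurd (h ▸ hx) hfC
    · exact h))

/-- strong circuit elimination -/
lemma strong_elimination (hC : M.IsCircuit' C) (hC' : M.IsCircuit' C')
    (he : e ∈ C ∩ C') (hf : f ∈ C \ C') (hE : M.E.Finite) :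
    ∃ D, M.IsCircuit' D ∧ f ∈ D ∧ D ⊆ (C ∪ C') \ {e} := by
  have hfe : f ≠ e := fun h => hf.2 (h ▸ he.2)
  set X : Set α := (C ∪ C') \ {e, f} with hX
  have hXE : X ⊆ M.E := (diff_subset).trans (union_subset hC.subset_ground hC'.subset_ground)
  have heX : e ∈ M.closure X := by
    have h1 : e ∈ M.closure (C' \ {e}) := hC'.mem_closure_diff_singleton he.2
    refine M.closure_subset_closure ?_ h1
    intro x hx
    refine ⟨Or.inr hx.1, ?_⟩
    simp only [mem_insert_iff, mem_singleton_iff, not_or]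
    exact ⟨fun h => hx.2 (by simp [h]), fun h => hf.2 (h ▸ hx.1)⟩
  have hfX : f ∈ M.closure X := by
    have h1 : f ∈ M.closure (C \ {f}) := hC.mem_closure_diff_singleton hf.1
    have h2 : C \ {f} ⊆ insert e X := by
      intro x hx
      rcases eq_or_ne x e with rfl | hxe
      · exact mem_insert _ _
      · refine Or.inr ⟨Or.inl hx.1, ?_⟩
        simp only [mem_insert_iff, mem_singleton_iff, not_or]
        exact ⟨hxe, fun h => hx.2 (by simp [h])⟩
    have h3 : M.closure (insert e X) = M.closure X := closure_insert_eq_of_mem_closure heX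
    exact (h3 ▸ M.closure_subset_closure h2) h1
  have hfX' : f ∉ X := fun h => h.2 (Or.inr rfl)
  obtain ⟨D, hD, hfD, hDsub⟩ := exists_circuit_of_mem_closure hfX hfX' hXE
    (hE.subset hXE)
  refine ⟨D, hD, hfD, hDsub.trans ?_⟩
  intro x hx
  rcases hx with rfl | hx
  · exact ⟨Or.inl hf.1, fun h => hfe h⟩
  · refine ⟨hx.1, fun h => ?_⟩
    have := hx.2
    simp only [mem_insert_iff, mem_singleton_iff, not_or] at this
    exact this.1 h

end CircBasic

section Cocirc

variable {M : Matroid α} {C K : Set α}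

lemma IsCocircuit'.subset_ground (h : M.IsCocircuit' K) : K ⊆ M.E := by
  have := IsCircuit'.subset_ground h
  rwa [dual_ground] at this

lemma IsCocircuit'.nonempty (h : M.IsCocircuit' K) : K.Nonempty := IsCircuit'.nonempty h

/-- a circuit and a cocircuit cannot meet in exactly one element -/
lemma circuit_cocircuit_inter_ncard_ne_one (hC : M.IsCircuit' C) (hK : M.IsCocircuit' K)
    (hE : M.E.Finite) : (C ∩ K).ncard ≠ 1 := by
  intro h1
  obtain ⟨e, he⟩ := ncard_eq_one.1 h1
  have heC : e ∈ C := (he ▸ (Set.mem_singleton e) : e ∈ C ∩ K).1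
  have heK : e ∈ K := (he ▸ (Set.mem_singleton e) : e ∈ C ∩ K).2
  -- C \ {e} ⊆ E \ K
  have hsub : C \ {e} ⊆ M.E \ K := by
    intro x hx
    refine ⟨hC.subset_ground hx.1, fun hxK => hx.2 ?_⟩
    have : x ∈ C ∩ K := ⟨hx.1, hxK⟩
    rw [he] at this; exact this
  have hecl : e ∈ M.closure (M.E \ K) :=
    M.closure_subset_closure hsub (hC.mem_closure_diff_singleton heC)
  -- K \ {e} is coindependent
  have hKE : K ⊆ M.E := hK.subset_ground
  have hKi : M✶.Indep (K \ {e}) := by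
    have : (K \ {e}) ⊂ K := sdiff_singleton_ssubset.2 heK
    exact IsCircuit'.ssubset_indep hK this
  obtain ⟨B, hB, hBsub⟩ := Coindep.exists_isBase_subset_compl (coindep_def.2 hKi)
  have hBcl : B ⊆ M.closure (M.E \ K) := by
    intro b hb
    have hbE : b ∈ M.E := hB.subset_ground hb
    have : b ∉ K \ {e} := fun h => (hBsub hb).2 h
    rcases eq_or_ne b e with rfl | hbe
    · exact hecl
    · exact M.subset_closure (M.E \ K) diff_subset ⟨hbE, fun hbK => this ⟨hbK, hbe⟩⟩
  have hsp : M.closure (M.E \ K) = M.E := by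
    have h1 : M.E = M.closure B := hB.closure_eq.symm
    have h2 : M.closure B ⊆ M.closure (M.closure (M.E \ K)) := M.closure_subset_closure hBcl
    rw [closure_closure] at h2
    exact subset_antisymm (M.closure_subset_ground _) (h1 ▸ h2)
  -- so E \ K is spanning, K is coindep, contradiction with K being a cocircuit (dep in dual)
  have hspan : M.Spanning (M.E \ K) := by
    rw [spanning_iff_closure_eq]; exact hsp
  obtain ⟨B', hB', hB'sub⟩ := hspan.exists_isBase_subset
  have : M.Coindep K := (coindep_iff_exists hKE).2 ⟨B', hB', hB'sub⟩
  exact (IsCircuit'.dep hK).not_indep this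

lemma circuit_cocircuit_two_le (hC : M.IsCircuit' C) (hK : M.IsCocircuit' K)
    (hE : M.E.Finite) (hne : (C ∩ K).Nonempty) : 2 ≤ (C ∩ K).ncard := by
  have hfin : (C ∩ K).Finite := (hC.finite hE).inter_of_left K
  have h1 : 0 < (C ∩ K).ncard := hne.ncard_pos hfin
  have h2 := circuit_cocircuit_inter_ncard_ne_one hC hK hE
  omega

end Cocirc

section Rank

variable {M : Matroid α} {I J X Y U : Set α}

lemma rk'_set_bddAbove (M : Matroid α) (hE : M.E.Finite) (X : Set α) :
    BddAbove {n : ℕ | ∃ I, M.Indep I ∧ I ⊆ X ∧ I.ncard = n} := by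
  refine ⟨M.E.ncard, fun n hn => ?_⟩
  obtain ⟨I, hI, -, rfl⟩ := hn
  exact ncard_le_ncard hI.subset_ground hE

lemma rk'_set_nonempty (M : Matroid α) (X : Set α) :
    {n : ℕ | ∃ I, M.Indep I ∧ I ⊆ X ∧ I.ncard = n}.Nonempty :=
  ⟨0, ∅, M.empty_indep, empty_subset X, ncard_empty α⟩

lemma Indep.ncard_le_rk' (hJ : M.Indep J) (hJX : J ⊆ X) (hE : M.E.Finite) :
    J.ncard ≤ M.rk' X :=
  le_csSup (M.rk'_set_bddAbove hE X) ⟨J, hJ, hJX, rfl⟩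

lemma IsBasis'.ncard_eq_rk' (hI : M.IsBasis' I X) (hE : M.E.Finite) : M.rk' X = I.ncard := by
  refine le_antisymm ?_ (hI.indep.ncard_le_rk' hI.subset hE)
  have hmem := Nat.sSup_mem (M.rk'_set_nonempty X) (M.rk'_set_bddAbove hE X)
  obtain ⟨J, hJ, hJX, hJcard⟩ := hmem
  rw [Matroid.rk', ← hJcard]
  obtain ⟨J', hJ', hJJ'⟩ := hJ.subset_isBasis'_of_subset hJX
  have h1 : (M ↾ X).IsBase J' := isBase_restrict_iff'.2 hJ'
  have h2 : (M ↾ X).IsBase I := isBase_restrict_iff'.2 hI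
  have hcard : J'.encard = I.encard := h1.encard_eq_encard_of_isBase h2
  calc J.ncard ≤ J'.ncard := ncard_le_ncard hJJ' (hE.subset hJ'.indep.subset_ground)
    _ = I.ncard := by rw [ncard_def, hcard, ← ncard_def]

lemma exists_basis'_ncard (M : Matroid α) (hE : M.E.Finite) (X : Set α) :
    ∃ I, M.IsBasis' I X ∧ M.rk' X = I.ncard := by
  obtain ⟨I, hI⟩ := M.exists_isBasis' X
  exact ⟨I, hI, hI.ncard_eq_rk' hE⟩

lemma rk'_mono (M : Matroid α) (hE : M.E.Finite) (hXY : X ⊆ Y) : M.rk' X ≤ M.rk' Y := by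
  obtain ⟨I, hI, hIcard⟩ := M.exists_basis'_ncard hE X
  rw [hIcard]
  exact hI.indep.ncard_le_rk' (hI.subset.trans hXY) hE

lemma Indep.rk'_eq (hI : M.Indep I) (hE : M.E.Finite) : M.rk' I = I.ncard := by
  have : M.IsBasis' I I := ⟨⟨hI, Subset.rfl⟩, fun J hJ hIJ => hJ.2⟩
  exact this.ncard_eq_rk' hE

lemma rk'_le_ncard (M : Matroid α) (hE : M.E.Finite) (X : Set α) (hX : X.Finite) :
    M.rk' X ≤ X.ncard := by
  obtain ⟨I, hI, hIcard⟩ := M.exists_basis'_ncard hE X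
  rw [hIcard]
  exact ncard_le_ncard hI.subset hX

lemma rk'_union_le (M : Matroid α) (hE : M.E.Finite) (X Y : Set α) :
    M.rk' (X ∪ Y) ≤ M.rk' X + M.rk' Y := by
  obtain ⟨I, hI, hIcard⟩ := M.exists_basis'_ncard hE (X ∪ Y)
  rw [hIcard]
  have hIfin : I.Finite := hE.subset hI.indep.subset_ground
  have h1 : I = (I ∩ X) ∪ (I \ X) := (inter_union_diff I X).symm
  have h2 : I.ncard ≤ (I ∩ X).ncard + (I \ X).ncard := by
    conv_lhs => rw [h1]
    exact ncard_union_le _ _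
  refine h2.trans (Nat.add_le_add ?_ ?_)
  · exact (hI.indep.subset inter_subset_left).ncard_le_rk' inter_subset_right hE
  · refine (hI.indep.subset diff_subset).ncard_le_rk' ?_ hE
    intro x hx
    rcases hI.subset hx.1 with h | h
    · exact absurd h hx.2
    · exact h

lemma rk'_closure_eq (M : Matroid α) (hE : M.E.Finite) (U : Set α) :
    M.rk' (M.closure U) = M.rk' U := by
  obtain ⟨I, hI, hIcard⟩ := M.exists_basis'_ncard hE U
  have hIbasis : M.IsBasis I (M.closure U) := by
    have h1 : M.IsBasis I (M.closure I) := hI.indep.isBasis_closure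
    rwa [hI.closure_eq_closure] at h1
  have : M.IsBasis' I (M.closure U) := hIbasis.isBasis'
  rw [this.ncard_eq_rk' hE, hIcard]

lemma rk'_le_of_subset_closure (M : Matroid α) (hE : M.E.Finite) (hX : X ⊆ M.closure U) :
    M.rk' X ≤ M.rk' U := by
  have := M.rk'_mono hE hX
  rwa [M.rk'_closure_eq hE U] at this

lemma rk'_ground_add_dual (M : Matroid α) (hE : M.E.Finite) :
    M.rk' M.E + M✶.rk' M✶.E = M.E.ncard := by
  obtain ⟨B, hB⟩ := M.exists_isBase
  have hBE := hB.subset_ground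
  have h1 : M.rk' M.E = B.ncard := (hB.isBasis_ground.isBasis').ncard_eq_rk' hE
  have hdual : M✶.IsBase (M.E \ B) := by
    rw [dual_isBase_iff diff_subset]
    rwa [diff_diff_cancel_left hBE]
  have h2 : M✶.rk' M✶.E = (M.E \ B).ncard := by
    have hE' : M✶.E.Finite := by rwa [dual_ground]
    exact (hdual.isBasis_ground.isBasis').ncard_eq_rk' hE'
  rw [h1, h2, ncard_diff hBE (hE.subset hBE)]
  have := ncard_le_ncard hBE hE
  omega

end Rank

end Matroid

section Helpers

open Matroid

variable {α : Type*}

lemma ncard_iUnion_fin : ∀ (n : ℕ) (A : Fin n → Set α), (∀ i, (A i).Finite) →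
    Pairwise (Function.onFun Disjoint A) → (⋃ i, A i).ncard = ∑ i, (A i).ncard := by
  intro n
  induction n with
  | zero => intro A _ _; simp
  | succ n ih =>
    intro A hfin hdisj
    have hsplit : (⋃ i, A i) = A 0 ∪ ⋃ (i : Fin n), A i.succ := by
      apply subset_antisymm
      · intro x hx
        obtain ⟨i, hi⟩ := mem_iUnion.1 hx
        rcases Fin.eq_zero_or_eq_succ i with rfl | ⟨j, rfl⟩
        · exact Or.inl hi
        · exact Or.inr (mem_iUnion.2 ⟨j, hi⟩)
      · intro x hx
        rcases hx with h | h
        · exact mem_iUnion.2 ⟨0, h⟩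
        · obtain ⟨j, hj⟩ := mem_iUnion.1 h
          exact mem_iUnion.2 ⟨j.succ, hj⟩
    have hd : Disjoint (A 0) (⋃ (i : Fin n), A i.succ) := by
      rw [Set.disjoint_iUnion_right]
      exact fun i => hdisj (Fin.succ_ne_zero i).symm
    have hufin : (⋃ (i : Fin n), A i.succ).Finite := finite_iUnion (fun i => hfin i.succ)
    rw [hsplit, Set.ncard_union_eq hd (hfin 0) hufin,
      ih (fun i => A i.succ) (fun i => hfin i.succ)
        (fun i j hij => hdisj (fun h => hij (Fin.succ_injective n h))), Fin.sum_univ_succ]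

lemma greedy_or_hit (out : Set α → Set α) : ∀ (p : ℕ) (F : Finset (Set α)),
    (∀ C ∈ F, (out C).Nonempty) →
    (∃ G ⊆ F, G.card = p ∧ (∀ C ∈ G, ∀ C' ∈ G, C ≠ C' → Disjoint (out C) (out C'))) ∨
    (∃ F₀ ⊆ F, F₀.card < p ∧ ∀ C ∈ F, ∃ C₀ ∈ F₀, ¬ Disjoint (out C) (out C₀)) := by
  classical
  intro p
  induction p with
  | zero =>
    intro F _
    exact Or.inl ⟨∅, Finset.empty_subset F, Finset.card_empty, by simp⟩
  | succ p ih =>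
    intro F hout
    rcases Finset.eq_empty_or_nonempty F with rfl | ⟨C₁, hC₁⟩
    · exact Or.inr ⟨∅, Finset.Subset.refl ∅, Nat.succ_pos p, by simp⟩
    set F' := F.filter (fun C => Disjoint (out C) (out C₁)) with hF'
    have hC₁F' : C₁ ∉ F' := by
      simp only [hF', Finset.mem_filter]
      rintro ⟨-, hdisj⟩
      exact (hout C₁ hC₁).ne_empty (disjoint_self.1 hdisj)
    rcases ih F' (fun C hC => hout C (Finset.filter_subset _ F hC)) with
      ⟨G', hG'sub, hG'card, hG'pair⟩ | ⟨F₀', hF₀'sub, hF₀'card, hF₀'hit⟩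
    · refine Or.inl ⟨insert C₁ G', ?_, ?_, ?_⟩
      · exact Finset.insert_subset hC₁ (hG'sub.trans (Finset.filter_subset _ F))
      · rw [Finset.card_insert_of_notMem (fun h => hC₁F' (hG'sub h)), hG'card]
      · intro C hC C' hC' hne
        rcases Finset.mem_insert.1 hC with rfl | hCm
        · rcases Finset.mem_insert.1 hC' with rfl | hC'm
          · exact absurd rfl hne
          · exact ((Finset.mem_filter.1 (hG'sub hC'm)).2).symm
        · rcases Finset.mem_insert.1 hC' with rfl | hC'm
          · exact (Finset.mem_filter.1 (hG'sub hCm)).2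
          · exact hG'pair C hCm C' hC'm hne
    · refine Or.inr ⟨insert C₁ F₀', ?_, ?_, ?_⟩
      · exact Finset.insert_subset hC₁ (hF₀'sub.trans (Finset.filter_subset _ F))
      · have := Finset.card_insert_le C₁ F₀'
        omega
      · intro C hC
        by_cases hCF' : C ∈ F'
        · obtain ⟨C₀, hC₀, hC₀h⟩ := hF₀'hit C hCF'
          exact ⟨C₀, Finset.mem_insert_of_mem hC₀, hC₀h⟩
        · refine ⟨C₁, Finset.mem_insert_self _ _, ?_⟩
          simp only [hF', Finset.mem_filter, hC, true_and] at hCF'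
          exact hCF'

lemma exists_big_fiber (F : Finset (Set α)) (V : Set α) (hV : V.Finite) (n : ℕ)
    (hcard : 2 ^ V.ncard * n ≤ F.card) :
    ∃ R ⊆ V, ∃ F' ⊆ F, n ≤ F'.card ∧ ∀ C ∈ F', C ∩ V = R := by
  classical
  set φ : Set α → Finset α := fun C => hV.toFinset.filter (· ∈ C) with hφ
  have hmaps : ∀ C ∈ F, φ C ∈ hV.toFinset.powerset :=
    fun C _ => Finset.mem_powerset.2 (Finset.filter_subset _ _)
  have hcard' : hV.toFinset.powerset.card * n ≤ F.card := by
    rwa [Set.ncard_eq_toFinset_card V hV, ← Finset.card_powerset] at hcard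
  obtain ⟨b, hb, hfib⟩ := Finset.exists_le_card_fiber_of_mul_le_card_of_maps_to hmaps
    ⟨∅, Finset.empty_mem_powerset _⟩ hcard'
  refine ⟨(b : Set α), ?_, ?_⟩
  · intro x hx
    have := Finset.mem_powerset.1 hb (by exact_mod_cast hx)
    rwa [Set.Finite.mem_toFinset] at this
  · refine ⟨F.filter (fun C => φ C = b), Finset.filter_subset _ _, hfib, ?_⟩
    intro C hC
    have h := (Finset.mem_filter.1 hC).2
    rw [← h]
    ext x
    simp only [hφ, Finset.coe_filter, Set.Finite.mem_toFinset, mem_inter_iff,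
      Set.mem_setOf_eq]
    exact ⟨fun ⟨a, b⟩ => ⟨b, a⟩, fun ⟨a, b⟩ => ⟨b, a⟩⟩

end Helpers


section Machinery

open Matroid

universe u

/-- Phase 2: from a large family of circuits with pairwise intersections inside a small set R,
extract m pairwise disjoint circuits. -/
theorem phase2 (m : ℕ) : ∀ (r : ℕ), ∃ N : ℕ, ∀ {α : Type u} (M : Matroid α), M.E.Finite →
    ∀ (R : Set α) (F : Finset (Set α)),
    (∀ C ∈ F, M.IsCircuit' C) → (∀ C ∈ F, ∀ C' ∈ F, C ≠ C' → C ∩ C' ⊆ R) →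
    (∀ C ∈ F, ¬ C ⊆ R) → R.Finite → R.ncard ≤ r → N ≤ F.card →
    ∃ D : Fin m → Set α, (∀ i, M.IsCircuit' (D i)) ∧ Pairwise (Function.onFun Disjoint D) := by
  intro r
  induction r with
  | zero =>
    refine ⟨m, ?_⟩
    intro α M hE R F hcirc hinter hnsub hRfin hRcard hN
    have hR : R = ∅ := by
      have : R.ncard = 0 := Nat.le_zero.1 hRcard
      exact (Set.ncard_eq_zero hRfin).1 this
    subst hR
    set L := F.toList with hL
    have hlen : m ≤ L.length := by rw [hL, Finset.length_toList]; exact hN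
    refine ⟨fun i => L.get ⟨i, lt_of_lt_of_le i.2 hlen⟩, ?_, ?_⟩
    · intro i
      exact hcirc _ (Finset.mem_toList.1 (L.get_mem _))
    · intro i j hij
      simp only [Function.onFun]
      have hnd : L.Nodup := Finset.nodup_toList F
      have hne : L.get ⟨i, lt_of_lt_of_le i.2 hlen⟩ ≠ L.get ⟨j, lt_of_lt_of_le j.2 hlen⟩ := by
        intro h
        have := List.nodup_iff_injective_get.1 hnd h
        simp only [Fin.mk.injEq] at this
        exact hij (Fin.ext this)
      have := hinter _ (Finset.mem_toList.1 (L.get_mem _)) _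
        (Finset.mem_toList.1 (L.get_mem _)) hne
      rw [Set.disjoint_iff_inter_eq_empty]
      exact subset_empty_iff.1 this
  | succ r ih =>
    obtain ⟨N', hN'⟩ := ih
    refine ⟨3 * N' + 2 * m + 2, ?_⟩
    intro α M hE R F hcirc hinter hnsub hRfin hRcard hN
    classical
    by_cases hsmall : R.ncard ≤ r
    · exact hN' M hE R F hcirc hinter hnsub hRfin hsmall (by omega)
    -- R is nonempty
    have hRne : R.Nonempty := by
      rw [Set.nonempty_iff_ne_empty]
      rintro rfl
      simp at hsmall
    obtain ⟨y, hy⟩ := hRne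
    set Fy := F.filter (fun C => y ∈ C) with hFy
    set Fn := F.filter (fun C => y ∉ C) with hFn
    have hsum : Fy.card + Fn.card = F.card := Finset.card_filter_add_card_filter_not _
    have hRy : (R \ {y}).ncard ≤ r := by
      have := Set.ncard_diff_singleton_lt_of_mem hy hRfin
      omega
    by_cases hFnbig : N' ≤ Fn.card
    · refine hN' M hE (R \ {y}) Fn (fun C hC => hcirc C (Finset.filter_subset _ F hC))
        ?_ ?_ hRfin.sdiff hRy hFnbig
      · intro C hC C' hC' hne
        have h1 := hinter C (Finset.filter_subset _ F hC) C' (Finset.filter_subset _ F hC') hne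
        intro x hx
        exact ⟨h1 hx, fun hxy => (Finset.mem_filter.1 hC).2 ((mem_singleton_iff.1 hxy) ▸ hx.1)⟩
      · intro C hC hsub
        exact hnsub C (Finset.filter_subset _ F hC) (hsub.trans diff_subset)
    -- Fy is big; pair up and eliminate y
    have hFybig : 2 * N' + 2 * m + 2 ≤ Fy.card := by omega
    set L := Fy.toList with hL
    have hnd : L.Nodup := Finset.nodup_toList Fy
    have hlen : 2 * N' + 2 * m + 2 ≤ L.length := by
      rw [hL, Finset.length_toList]; exact hFybig
    set k := N' + m + 1 with hk
    have hidx : ∀ j : Fin k, 2 * (j : ℕ) + 1 < L.length := by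
      intro j
      have := j.2
      omega
    -- the two circuits in pair j
    set Cp : Fin k → Set α := fun j => L.get ⟨2 * j, by have := hidx j; omega⟩ with hCp
    set Cq : Fin k → Set α := fun j => L.get ⟨2 * j + 1, hidx j⟩ with hCq
    have hgetF : ∀ (i : ℕ) (h : i < L.length), L.get ⟨i, h⟩ ∈ Fy := by
      intro i h
      exact Finset.mem_toList.1 (L.get_mem _)
    have hget_inj : ∀ (i i' : ℕ) (h : i < L.length) (h' : i' < L.length),
        L.get ⟨i, h⟩ = L.get ⟨i', h'⟩ → i = i' := by
      intro i i' h h' heq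
      have := List.nodup_iff_injective_get.1 hnd heq
      simpa using this
    have hCpF : ∀ j, Cp j ∈ F := fun j => Finset.filter_subset _ F (hgetF _ _)
    have hCqF : ∀ j, Cq j ∈ F := fun j => Finset.filter_subset _ F (hgetF _ _)
    have hyCp : ∀ j, y ∈ Cp j := fun j => (Finset.mem_filter.1 (hgetF _ _)).2
    have hyCq : ∀ j, y ∈ Cq j := fun j => (Finset.mem_filter.1 (hgetF _ _)).2
    have hCpq_ne : ∀ j, Cp j ≠ Cq j := by
      intro j h
      have := hget_inj _ _ _ _ h
      omega
    -- choose f j ∈ Cp j \ R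
    have hf : ∀ j : Fin k, ∃ f, f ∈ Cp j ∧ f ∉ R := by
      intro j
      obtain ⟨f, hf1, hf2⟩ := not_subset.1 (hnsub _ (hCpF j))
      exact ⟨f, hf1, hf2⟩
    choose f hfC hfR using hf
    -- eliminate
    have helim : ∀ j : Fin k, ∃ D, M.IsCircuit' D ∧ f j ∈ D ∧ D ⊆ (Cp j ∪ Cq j) \ {y} := by
      intro j
      have hfnotCq : f j ∉ Cq j := by
        intro h
        exact hfR j (hinter _ (hCpF j) _ (hCqF j) (hCpq_ne j) ⟨hfC j, h⟩)
      exact strong_elimination (hcirc _ (hCpF j)) (hcirc _ (hCqF j))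
        ⟨hyCp j, hyCq j⟩ ⟨hfC j, hfnotCq⟩ hE
    choose D hDcirc hfD hDsub using helim
    -- pairwise distinct sources
    have hsrc_ne : ∀ j j' : Fin k, j ≠ j' →
        Cp j ≠ Cp j' ∧ Cp j ≠ Cq j' ∧ Cq j ≠ Cp j' ∧ Cq j ≠ Cq j' := by
      intro j j' hjj'
      have hj : (j : ℕ) ≠ (j' : ℕ) := fun h => hjj' (Fin.ext h)
      refine ⟨?_, ?_, ?_, ?_⟩ <;> intro h <;> have := hget_inj _ _ _ _ h <;> omega
    have hDinter : ∀ j j' : Fin k, j ≠ j' → D j ∩ D j' ⊆ R \ {y} := by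
      intro j j' hjj' x hx
      obtain ⟨h1, h2, h3, h4⟩ := hsrc_ne j j' hjj'
      have hx1 := hDsub j hx.1
      have hx2 := hDsub j' hx.2
      have hxy : x ≠ y := fun h => hx1.2 (by simp [h])
      refine ⟨?_, hxy⟩
      rcases hx1.1 with ha | ha <;> rcases hx2.1 with hb | hb
      · exact hinter _ (hCpF j) _ (hCpF j') h1 ⟨ha, hb⟩
      · exact hinter _ (hCpF j) _ (hCqF j') h2 ⟨ha, hb⟩
      · exact hinter _ (hCqF j) _ (hCpF j') h3 ⟨ha, hb⟩
      · exact hinter _ (hCqF j) _ (hCqF j') h4 ⟨ha, hb⟩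
    have hDne : ∀ j j' : Fin k, j ≠ j' → D j ≠ D j' := by
      intro j j' hjj' h
      have : f j ∈ D j ∩ D j' := ⟨hfD j, h ▸ hfD j⟩
      exact hfR j ((hDinter j j' hjj' this).1)
    -- build new finset
    set G := Finset.image D Finset.univ with hG
    have hDinj : Function.Injective D := by
      intro j j' h
      by_contra hne
      exact hDne j j' hne h
    have hGcard : G.card = k := by
      rw [hG, Finset.card_image_of_injective _ hDinj, Finset.card_univ, Fintype.card_fin]
    refine hN' M hE (R \ {y}) G ?_ ?_ ?_ hRfin.sdiff hRy (by rw [hGcard]; omega)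
    · intro C hC
      obtain ⟨j, -, rfl⟩ := Finset.mem_image.1 hC
      exact hDcirc j
    · intro C hC C' hC' hne
      obtain ⟨j, -, rfl⟩ := Finset.mem_image.1 hC
      obtain ⟨j', -, rfl⟩ := Finset.mem_image.1 hC'
      have hjj' : j ≠ j' := fun h => hne (h ▸ rfl)
      exact hDinter j j' hjj'
    · intro C hC hsub
      obtain ⟨j, -, rfl⟩ := Finset.mem_image.1 hC
      exact hfR j (hsub (hfD j)).1

/-- bound on the ncard of a finite union -/
lemma ncard_biUnion_le {α : Type u} (F : Finset (Set α)) (f : Set α → Set α)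
    (hfin : ∀ C ∈ F, (f C).Finite) :
    (⋃ C ∈ F, f C).ncard ≤ ∑ C ∈ F, (f C).ncard := by
  classical
  induction F using Finset.induction_on with
  | empty => simp
  | @insert a G ha ih =>
    rw [Finset.set_biUnion_insert, Finset.sum_insert ha]
    refine le_trans (ncard_union_le _ _) ?_
    exact Nat.add_le_add le_rfl (ih (fun C hC => hfin C (Finset.mem_insert_of_mem hC)))

/-- Phase 1 -/
theorem phase1 (m s : ℕ) : ∀ (k : ℕ), ∃ N : ℕ, 1 ≤ N ∧ ∀ {α : Type u} (M : Matroid α),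
    M.E.Finite → ∀ (Y R : Set α) (F : Finset (Set α)), Y.Finite →
    (∀ C ∈ F, M.IsCircuit' C ∧ C.ncard = 2 * s ∧ C ∩ Y = R) →
    2 * s ≤ R.ncard + k → N ≤ F.card →
    ∃ D : Fin m → Set α, (∀ i, M.IsCircuit' (D i)) ∧ Pairwise (Function.onFun Disjoint D) := by
  intro k
  induction k with
  | zero =>
    refine ⟨2, le_of_lt one_lt_two, ?_⟩
    intro α M hE Y R F hY hF hcard hN
    exfalso
    obtain ⟨C, hC, C', hC', hne⟩ := Finset.one_lt_card.1 (lt_of_lt_of_le one_lt_two hN)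
    obtain ⟨hCcirc, hCcard, hCR⟩ := hF C hC
    obtain ⟨hC'circ, hC'card, hC'R⟩ := hF C' hC'
    have hCfin : C.Finite := hCcirc.finite hE
    have hC'fin : C'.Finite := hC'circ.finite hE
    have h1 : R = C := by
      refine Set.eq_of_subset_of_ncard_le ?_ ?_ hCfin
      · rw [← hCR]; exact inter_subset_left
      · rw [hCcard]; simpa using hcard
    have h2 : R = C' := by
      refine Set.eq_of_subset_of_ncard_le ?_ ?_ hC'fin
      · rw [← hC'R]; exact inter_subset_left
      · rw [hC'card]; simpa using hcard
    exact hne (h1 ▸ h2)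
  | succ k ih =>
    obtain ⟨Nk, hNk1, hNk⟩ := ih
    obtain ⟨N₂, hN₂⟩ := phase2 m (2 * s)
    refine ⟨2 ^ (2 * s * (N₂ + 1)) * Nk + N₂ + 2, by omega, ?_⟩
    intro α M hE Y R F hY hF hcard hN
    classical
    set F₁ := F.erase R with hF₁
    have hF₁card : 2 ^ (2 * s * (N₂ + 1)) * Nk + N₂ + 1 ≤ F₁.card := by
      have h := Finset.pred_card_le_card_erase (s := F) (a := R)
      rw [← hF₁] at h
      omega
    have hF₁sub : F₁ ⊆ F := Finset.erase_subset _ _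
    have hRsubC : ∀ C ∈ F, R ⊆ C := by
      intro C hC
      rw [← (hF C hC).2.2]
      exact inter_subset_left
    have hout : ∀ C ∈ F₁, (C \ Y).Nonempty := by
      intro C hC
      rw [Set.nonempty_iff_ne_empty]
      intro hempty
      have hCY : C ⊆ Y := by
        intro x hx
        by_contra hxY
        exact (hempty ▸ (⟨hx, hxY⟩ : x ∈ C \ Y) : x ∈ (∅ : Set α))
      have : C = R := by
        rw [← (hF C (hF₁sub hC)).2.2]
        exact (inter_eq_self_of_subset_left hCY).symm
      exact (Finset.mem_erase.1 hC).1 this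
    rcases greedy_or_hit (fun C => C \ Y) (N₂ + 1) F₁ hout with
      ⟨G, hGsub, hGcard, hGpair⟩ | ⟨F₀, hF₀sub, hF₀card, hF₀hit⟩
    · -- feed phase 2
      have hGne : G.Nonempty := Finset.card_pos.1 (by omega)
      obtain ⟨C₀, hC₀⟩ := hGne
      have hC₀F : C₀ ∈ F := hF₁sub (hGsub hC₀)
      have hRfin : R.Finite := by
        rw [← (hF C₀ hC₀F).2.2]
        exact ((hF C₀ hC₀F).1.finite hE).inter_of_left Y
      have hRcard : R.ncard ≤ 2 * s := by
        have h1 := ncard_le_ncard (hRsubC C₀ hC₀F) ((hF C₀ hC₀F).1.finite hE)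
        rw [(hF C₀ hC₀F).2.1] at h1
        exact h1
      refine hN₂ M hE R G (fun C hC => (hF C (hF₁sub (hGsub hC))).1) ?_ ?_ hRfin hRcard
        (by omega)
      · intro C hC C' hC' hne x hx
        by_cases hxY : x ∈ Y
        · rw [← (hF C (hF₁sub (hGsub hC))).2.2]; exact ⟨hx.1, hxY⟩
        · exfalso
          have hdisj := hGpair C hC C' hC' hne
          exact (hdisj.ne_of_mem ⟨hx.1, hxY⟩ ⟨hx.2, hxY⟩) rfl
      · intro C hC hsub
        have hCR : C = R := hsub.antisymm (hRsubC C (hF₁sub (hGsub hC)))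
        exact (Finset.mem_erase.1 (hGsub hC)).1 hCR
    · -- hitting set; grow the trace
      set V : Set α := ⋃ C₀ ∈ F₀, (C₀ \ Y) with hV
      have hVfin : V.Finite := by
        refine Set.Finite.biUnion F₀.finite_toSet ?_
        intro C₀ hC₀
        exact ((hF C₀ (hF₁sub (hF₀sub hC₀))).1.finite hE).sdiff (t := Y)
      have hVY : Disjoint V Y := by
        rw [Set.disjoint_left]
        rintro x hx
        simp only [hV, mem_iUnion] at hx
        obtain ⟨C₀, -, hxC₀⟩ := hx
        exact hxC₀.2
      have hVcard : V.ncard ≤ 2 * s * (N₂ + 1) := by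
        refine le_trans (ncard_biUnion_le F₀ (fun C₀ => C₀ \ Y) ?_) ?_
        · intro C₀ hC₀
          exact ((hF C₀ (hF₁sub (hF₀sub hC₀))).1.finite hE).sdiff (t := Y)
        · refine le_trans (Finset.sum_le_card_nsmul F₀ _ (2 * s) ?_) ?_
          · intro C₀ hC₀
            have h1 : (C₀ \ Y).ncard ≤ C₀.ncard :=
              ncard_le_ncard diff_subset ((hF C₀ (hF₁sub (hF₀sub hC₀))).1.finite hE)
            rw [(hF C₀ (hF₁sub (hF₀sub hC₀))).2.1] at h1
            exact h1
          · simp only [smul_eq_mul]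
            have := hF₀card
            calc F₀.card * (2 * s) ≤ N₂ * (2 * s) := Nat.mul_le_mul_right _ (by omega)
              _ ≤ 2 * s * (N₂ + 1) := by ring_nf; omega
      have hbig : 2 ^ V.ncard * Nk ≤ F₁.card := by
        have h1 : (2 : ℕ) ^ V.ncard ≤ 2 ^ (2 * s * (N₂ + 1)) :=
          Nat.pow_le_pow_right (by norm_num) hVcard
        have h2 : 2 ^ V.ncard * Nk ≤ 2 ^ (2 * s * (N₂ + 1)) * Nk :=
          Nat.mul_le_mul_right _ h1
        omega
      obtain ⟨R', hR'V, F', hF'sub, hF'card, hF'trace⟩ := exists_big_fiber F₁ V hVfin Nk hbig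
      -- members of F' have nonempty intersection with V
      have hF'ne : F'.Nonempty := Finset.card_pos.1 (by omega)
      obtain ⟨Cw, hCw⟩ := hF'ne
      have hR'ne : R'.Nonempty := by
        obtain ⟨C₀, hC₀F₀, hhit⟩ := hF₀hit Cw (hF'sub hCw)
        rw [Set.not_disjoint_iff] at hhit
        obtain ⟨x, hx1, hx2⟩ := hhit
        have hxV : x ∈ V := by
          simp only [hV, mem_iUnion]
          exact ⟨C₀, hC₀F₀, hx2⟩
        exact ⟨x, hF'trace Cw hCw ▸ (⟨hx1.1, hxV⟩ : x ∈ Cw ∩ V)⟩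
      -- R is finite
      have hRfin : R.Finite := by
        rw [← (hF Cw (hF₁sub (hF'sub hCw))).2.2]
        exact ((hF Cw (hF₁sub (hF'sub hCw))).1.finite hE).inter_of_left Y
      have hRY : R ⊆ Y := by
        rw [← (hF Cw (hF₁sub (hF'sub hCw))).2.2]
        exact inter_subset_right
      have hRR'disj : Disjoint R R' := by
        rw [Set.disjoint_left]
        intro x hxR hxR'
        exact (Set.disjoint_left.1 hVY) (hR'V hxR') (hRY hxR)
      have hR'fin : R'.Finite := hVfin.subset hR'V
      have hcard' : R.ncard + 1 ≤ (R ∪ R').ncard := by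
        rw [Set.ncard_union_eq hRR'disj hRfin hR'fin]
        have := hR'ne.ncard_pos hR'fin
        omega
      refine hNk M hE (Y ∪ V) (R ∪ R') F' (hY.union hVfin) ?_ (by omega) hF'card
      intro C hC
      refine ⟨(hF C (hF₁sub (hF'sub hC))).1, (hF C (hF₁sub (hF'sub hC))).2.1, ?_⟩
      rw [Set.inter_union_distrib_left, (hF C (hF₁sub (hF'sub hC))).2.2, hF'trace C hC]

/-- building an arbitrarily large family of distinct 2s-circuits -/
lemma exists_circuit_family {α : Type u} (M : Matroid α) (hE : M.E.Finite) (s : ℕ) (hs : 0 < s)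
    (hprop : ∀ S ⊆ M.E, S.ncard = s → ∃ C, M.IsCircuit' C ∧ C.ncard = 2 * s ∧ S ⊆ C) :
    ∀ n : ℕ, 2 * s * n + s ≤ M.E.ncard →
    ∃ F : Finset (Set α), F.card = n ∧ ∀ C ∈ F, M.IsCircuit' C ∧ C.ncard = 2 * s := by
  classical
  intro n
  induction n with
  | zero => exact fun _ => ⟨∅, rfl, by simp⟩
  | succ n ih =>
    intro hcard
    have hh : 2 * s * (n + 1) = 2 * s * n + 2 * s := by ring
    obtain ⟨F, hFcard, hF⟩ := ih (by omega)
    set U : Set α := ⋃ C ∈ F, C with hU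
    have hUfin : U.Finite := Set.Finite.biUnion F.finite_toSet (fun C hC => (hF C hC).1.finite hE)
    have hUcard : U.ncard ≤ 2 * s * n := by
      refine le_trans (ncard_biUnion_le F id (fun C hC => (hF C hC).1.finite hE)) ?_
      refine le_trans (Finset.sum_le_card_nsmul F _ (2 * s)
        (fun C hC => le_of_eq (hF C hC).2)) ?_
      simp only [smul_eq_mul]
      rw [hFcard, Nat.mul_comm]
    have hEU : (M.E \ U).Nonempty := by
      rw [Set.nonempty_iff_ne_empty]
      intro hempty
      have hEsub : M.E ⊆ U := by
        intro x hx
        by_contra hxU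
        exact (hempty ▸ (⟨hx, hxU⟩ : x ∈ M.E \ U) : x ∈ (∅ : Set α))
      have := ncard_le_ncard hEsub hUfin
      omega
    obtain ⟨e, heE, heU⟩ := hEU
    have hs1 : s - 1 ≤ (M.E \ {e}).ncard := by
      rw [ncard_sdiff_singleton_of_mem heE]
      omega
    obtain ⟨S', hS'sub, hS'card⟩ := Set.exists_subset_card_eq hs1
    have heS' : e ∉ S' := fun h => (hS'sub h).2 rfl
    set S : Set α := insert e S' with hS
    have hScard : S.ncard = s := by
      rw [hS, Set.ncard_insert_of_notMem heS' ((hE.subset (hS'sub.trans diff_subset)))]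
      omega
    have hSsub : S ⊆ M.E := insert_subset heE (hS'sub.trans diff_subset)
    obtain ⟨C₀, hC₀circ, hC₀card, hSC₀⟩ := hprop S hSsub hScard
    have hC₀new : C₀ ∉ F := by
      intro h
      exact heU (by
        simp only [hU, mem_iUnion]
        exact ⟨C₀, h, hSC₀ (mem_insert e S')⟩)
    refine ⟨insert C₀ F, ?_, ?_⟩
    · rw [Finset.card_insert_of_notMem hC₀new, hFcard]
    · intro C hC
      rcases Finset.mem_insert.1 hC with rfl | hC
      · exact ⟨hC₀circ, hC₀card⟩
      · exact hF C hC

/-- a large enough matroid with the circuit half of the property has m disjoint circuits -/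
theorem exists_disjoint_circuits (m s : ℕ) : ∃ N : ℕ,
    ∀ {α : Type u} (M : Matroid α), M.E.Finite → 0 < s →
    (∀ S ⊆ M.E, S.ncard = s → ∃ C, M.IsCircuit' C ∧ C.ncard = 2 * s ∧ S ⊆ C) →
    N ≤ M.E.ncard →
    ∃ D : Fin m → Set α, (∀ i, M.IsCircuit' (D i)) ∧ Pairwise (Function.onFun Disjoint D) := by
  obtain ⟨N₁, hN₁pos, hN₁⟩ := phase1.{u} m s (2 * s)
  refine ⟨2 * s * N₁ + s, ?_⟩
  intro α M hE hs hprop hcard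
  obtain ⟨F, hFcard, hF⟩ := exists_circuit_family M hE s hs hprop N₁ hcard
  refine hN₁ M hE ∅ ∅ F finite_empty ?_ (by simp) (le_of_eq hFcard.symm)
  intro C hC
  exact ⟨(hF C hC).1, (hF C hC).2, by simp⟩

end Machinery


section Box

open Matroid


variable {α : Type u}

/-- Box argument: from n*t pairwise disjoint circuits, get n pairwise disjoint 2t-cocircuits. -/
theorem box_argument (M : Matroid α) (hE : M.E.Finite) (n t : ℕ) (ht : 0 < t)
    (hco : ∀ T ⊆ M.E, T.ncard = t → ∃ K, M.IsCocircuit' K ∧ K.ncard = 2 * t ∧ T ⊆ K)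
    (D : Fin (n * t) → Set α) (hD : ∀ j, M.IsCircuit' (D j))
    (hdisj : Pairwise (Function.onFun Disjoint D)) :
    ∃ Cs : Fin n → Set α, Pairwise (Function.onFun Disjoint Cs) ∧
      ∀ i, M.IsCocircuit' (Cs i) ∧ (Cs i).ncard = 2 * t := by
  classical
  have hg' : ∀ (i : Fin n) (l : Fin t), (i : ℕ) * t + (l : ℕ) < n * t := by
    intro i l
    have h1 : (i : ℕ) + 1 ≤ n := i.2
    have h2 : ((i : ℕ) + 1) * t ≤ n * t := Nat.mul_le_mul_right t h1
    have h3 : (i : ℕ) * t + (l : ℕ) < (i : ℕ) * t + t := by omega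
    calc (i : ℕ) * t + (l : ℕ) < (i : ℕ) * t + t := h3
      _ = ((i : ℕ) + 1) * t := by ring
      _ ≤ n * t := h2
  set g : Fin n → Fin t → Fin (n * t) := fun i l => ⟨(i : ℕ) * t + (l : ℕ), hg' i l⟩ with hg
  have hg_ne : ∀ (i i' : Fin n) (l l' : Fin t), i ≠ i' → g i l ≠ g i' l' := by
    intro i i' l l' hii' heq
    have h1 : (i : ℕ) * t + (l : ℕ) = (i' : ℕ) * t + (l' : ℕ) := by
      simpa [hg] using congrArg (Fin.val) heq
    have hne : (i : ℕ) ≠ (i' : ℕ) := fun h => hii' (Fin.ext h)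
    rcases Nat.lt_or_ge (i : ℕ) (i' : ℕ) with h | h
    · have : ((i : ℕ) + 1) * t ≤ (i' : ℕ) * t := Nat.mul_le_mul_right t (by omega)
      have hl := l.2
      have hl' := l'.2
      nlinarith
    · have h' : (i' : ℕ) < (i : ℕ) := by omega
      have : ((i' : ℕ) + 1) * t ≤ (i : ℕ) * t := Nat.mul_le_mul_right t (by omega)
      have hl := l.2
      have hl' := l'.2
      nlinarith
  have hg_inj : ∀ (i : Fin n), Function.Injective (g i) := by
    intro i l l' heq
    have h1 : (i : ℕ) * t + (l : ℕ) = (i : ℕ) * t + (l' : ℕ) := by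
      simpa [hg] using congrArg (Fin.val) heq
    exact Fin.ext (by omega)
  -- transversal
  have hx : ∀ j, ∃ e, e ∈ D j := fun j => (hD j).nonempty
  choose x hxmem using hx
  set T : Fin n → Set α := fun i => Set.range (fun l : Fin t => x (g i l)) with hT
  have hxinj : ∀ i, Function.Injective (fun l : Fin t => x (g i l)) := by
    intro i l l' heq
    by_contra hne
    have hgne : g i l ≠ g i l' := fun h => hne (hg_inj i h)
    exact (hdisj hgne).ne_of_mem (hxmem (g i l)) (hxmem (g i l')) heq
  have hTcard : ∀ i, (T i).ncard = t := by
    intro i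
    have h0 : T i = (fun l : Fin t => x (g i l)) '' Set.univ := by
      rw [hT, Set.image_univ]
    rw [h0, Set.ncard_image_of_injective _ (hxinj i), Set.ncard_univ]
    simp
  have hTsub : ∀ i, T i ⊆ M.E := by
    rintro i e ⟨l, rfl⟩
    exact (hD (g i l)).subset_ground (hxmem (g i l))
  have hK : ∀ i : Fin n, ∃ K, M.IsCocircuit' K ∧ K.ncard = 2 * t ∧ T i ⊆ K :=
    fun i => hco (T i) (hTsub i) (hTcard i)
  choose K hKco hKcard hTK using hK
  -- confinement
  have hKfin : ∀ i, (K i).Finite := fun i => hE.subset (hKco i).subset_ground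
  have hconf : ∀ i, K i ⊆ ⋃ l : Fin t, D (g i l) := by
    intro i
    set B : Fin t → Set α := fun l => K i ∩ D (g i l) with hB
    have hBfin : ∀ l, (B l).Finite := fun l => (hKfin i).inter_of_left _
    have hBdisj : Pairwise (Function.onFun Disjoint B) := by
      intro l l' hll'
      have : Disjoint (D (g i l)) (D (g i l')) :=
        hdisj (fun h => hll' (hg_inj i h))
      exact (this.mono inter_subset_right inter_subset_right)
    have hB2 : ∀ l, 2 ≤ (B l).ncard := by
      intro l
      have hb : 2 ≤ (D (g i l) ∩ K i).ncard := by
        refine circuit_cocircuit_two_le (hD (g i l)) (hKco i) hE ⟨x (g i l), ?_, ?_⟩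
        · exact hxmem (g i l)
        · exact hTK i ⟨l, rfl⟩
      rw [hB]
      simpa [Set.inter_comm] using hb
    have hsum : 2 * t ≤ (⋃ l, B l).ncard := by
      rw [ncard_iUnion_fin t B hBfin hBdisj]
      calc 2 * t = ∑ _l : Fin t, 2 := by simp [mul_comm]
        _ ≤ ∑ l, (B l).ncard := Finset.sum_le_sum (fun l _ => hB2 l)
    have hBsubK : (⋃ l, B l) ⊆ K i := by
      intro z hz
      obtain ⟨l, hl⟩ := mem_iUnion.1 hz
      exact hl.1
    have heq : (⋃ l, B l) = K i := by
      refine Set.eq_of_subset_of_ncard_le hBsubK ?_ (hKfin i)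
      rw [hKcard i]
      exact hsum
    rw [← heq]
    intro z hz
    obtain ⟨l, hl⟩ := mem_iUnion.1 hz
    exact mem_iUnion.2 ⟨l, hl.2⟩
  refine ⟨K, ?_, fun i => ⟨hKco i, hKcard i⟩⟩
  intro i i' hii'
  have h1 := hconf i
  have h2 := hconf i'
  refine Set.disjoint_of_subset h1 h2 ?_
  rw [Set.disjoint_iUnion_left]
  intro l
  rw [Set.disjoint_iUnion_right]
  intro l'
  exact hdisj (hg_ne i i' l l' hii')

end Box


section Assembly

open Matroid


variable {α : Type u}

lemma all_eq_two {n : ℕ} (f : Fin n → ℕ) (h2 : ∀ i, 2 ≤ f i) (hsum : ∑ i, f i = 2 * n) :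
    ∀ i, f i = 2 := by
  intro i₀
  have h := Finset.add_sum_erase Finset.univ f (Finset.mem_univ i₀)
  have hcard : (Finset.univ.erase i₀).card = n - 1 := by
    rw [Finset.card_erase_of_mem (Finset.mem_univ i₀), Finset.card_univ, Fintype.card_fin]
  have hle : (n - 1) * 2 ≤ ∑ j ∈ Finset.univ.erase i₀, f j := by
    have := Finset.card_nsmul_le_sum (Finset.univ.erase i₀) f 2
      (fun j _ => h2 j)
    rw [hcard] at this
    simpa [smul_eq_mul] using this
  have hn : 1 ≤ n := by
    rcases Nat.eq_zero_or_pos n with rfl | h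
    · exact absurd i₀.2 (by omega)
    · exact h
  have h2' := h2 i₀
  omega

lemma partition_count (M : Matroid α) (hE : M.E.Finite) {n : ℕ} (Cs : Fin n → Set α)
    (hdisj : Pairwise (Function.onFun Disjoint Cs)) (hsub : ∀ i, Cs i ⊆ M.E)
    (C : Set α) (hC : C ⊆ M.E) :
    C.ncard = (C ∩ (M.E \ ⋃ i, Cs i)).ncard + ∑ i, (C ∩ Cs i).ncard := by
  set W := M.E \ ⋃ i, Cs i with hW
  have hCfin : C.Finite := hE.subset hC
  have hsplit : C = (C ∩ W) ∪ ⋃ i, (C ∩ Cs i) := by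
    apply subset_antisymm
    · intro x hx
      by_cases hxU : x ∈ ⋃ i, Cs i
      · obtain ⟨i, hi⟩ := mem_iUnion.1 hxU
        exact Or.inr (mem_iUnion.2 ⟨i, hx, hi⟩)
      · exact Or.inl ⟨hx, hC hx, hxU⟩
    · rintro x (hx | hx)
      · exact hx.1
      · obtain ⟨i, hi⟩ := mem_iUnion.1 hx
        exact hi.1
  have hd : Disjoint (C ∩ W) (⋃ i, (C ∩ Cs i)) := by
    rw [Set.disjoint_iUnion_right]
    intro i
    rw [Set.disjoint_left]
    rintro x ⟨-, -, hxU⟩ hxi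
    exact hxU (mem_iUnion.2 ⟨i, hxi.2⟩)
  have hpair : Pairwise (Function.onFun Disjoint (fun i => C ∩ Cs i)) := by
    intro i j hij
    exact (hdisj hij).mono inter_subset_right inter_subset_right
  have hfin1 : (C ∩ W).Finite := hCfin.inter_of_left W
  have hfin2 : ∀ i, (C ∩ Cs i).Finite := fun i => hCfin.inter_of_left _
  calc C.ncard = ((C ∩ W) ∪ ⋃ i, (C ∩ Cs i)).ncard := by rw [← hsplit]
    _ = (C ∩ W).ncard + (⋃ i, (C ∩ Cs i)).ncard :=
        Set.ncard_union_eq hd hfin1 (finite_iUnion hfin2)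
    _ = (C ∩ W).ncard + ∑ i, (C ∩ Cs i).ncard := by
        rw [ncard_iUnion_fin n _ hfin2 hpair]

theorem statement9_main : ∃ g : ℕ × ℕ × ℕ → ℕ, ∀ (s t q : ℕ), 0 < s → 0 < t → 0 < q →
    ∀ {α : Type u} (M : Matroid α), M.E.Finite →
      M.HasProp s (2 * s) t (2 * t) → M✶.rk' M.E ≤ M.rk' M.E →
      g (s, t, q) ≤ M.E.ncard →
      ∃ Cs : Fin (s - 1) → Set α, Pairwise (Function.onFun Disjoint Cs) ∧
        (∀ i, M.IsCocircuit' (Cs i) ∧ (Cs i).ncard = 2 * t) ∧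
        ∃ Z ⊆ M.E \ ⋃ i, Cs i, q ≤ M.rk' Z ∧
          ∀ z ∈ Z, ∃ z' ∈ Z \ {z}, ∃ C, M.IsCircuit' C ∧ C.ncard = 2 * s ∧
            {z, z'} ⊆ C ∧ ∀ i, (C ∩ Cs i).ncard = 2 := by
  classical
  have hdc := fun (s t : ℕ) => exists_disjoint_circuits.{u} ((s - 1) * t) s
  choose Nd hNd using hdc
  refine ⟨fun p => Nd p.1 p.2.1 + 2 * p.2.2 + 8 * p.2.1 * p.1 + 2 * p.1 + 2, ?_⟩
  intro s t q hs ht hq α M hE hprop hdual hcard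
  obtain ⟨hcirc, hco⟩ := hprop
  -- Step 1: disjoint circuits
  obtain ⟨D, hD, hDdisj⟩ := hNd s t M hE hs hcirc (by simp at hcard ⊢; omega)
  -- Step 2: box argument
  obtain ⟨Cs, hCsdisj, hCs⟩ := box_argument M hE (s - 1) t ht hco D hD hDdisj
  set U : Set α := ⋃ i, Cs i with hU
  set W : Set α := M.E \ U with hW
  have hCsSub : ∀ i, Cs i ⊆ M.E := fun i => (hCs i).1.subset_ground
  have hUsub : U ⊆ M.E := by
    rw [hU, iUnion_subset_iff]; exact hCsSub
  have hUfin : U.Finite := hE.subset hUsub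
  have hUcard : U.ncard ≤ 2 * t * (s - 1) := by
    rw [hU]
    refine le_trans (le_of_eq (ncard_iUnion_fin (s - 1) Cs
      (fun i => hE.subset (hCsSub i)) hCsdisj)) ?_
    refine le_trans (Finset.sum_le_card_nsmul Finset.univ _ (2 * t)
      (fun i _ => le_of_eq (hCs i).2)) ?_
    simp [smul_eq_mul, mul_comm]
  -- the set Z
  set Z : Set α := {z | z ∈ W ∧ ∃ z' C, z' ∈ W ∧ z' ≠ z ∧ M.IsCircuit' C ∧
    C.ncard = 2 * s ∧ C ∩ W = {z, z'} ∧ ∀ i, (C ∩ Cs i).Nonempty} with hZ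
  have hZW : Z ⊆ W := fun z hz => hz.1
  -- claim: bad elements lie in the closure of U
  have hbad : ∀ z ∈ W, z ∉ Z → z ∈ M.closure U := by
    intro z hzW hzZ
    -- build transversal
    have hc : ∀ i : Fin (s - 1), ∃ e, e ∈ Cs i := fun i => (hCs i).1.nonempty
    choose c hc using hc
    have hcinj : Function.Injective c := by
      intro i j hij
      by_contra hne
      exact (hCsdisj hne).ne_of_mem (hc i) (hc j) hij
    have hcU : ∀ i, c i ∈ U := fun i => mem_iUnion.2 ⟨i, hc i⟩
    have hzc : z ∉ Set.range c := by
      rintro ⟨i, rfl⟩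
      exact hzW.2 (hcU i)
    set S : Set α := insert z (Set.range c) with hS
    have hrange : (Set.range c).ncard = s - 1 := by
      rw [← Set.image_univ, Set.ncard_image_of_injective _ hcinj, Set.ncard_univ]
      simp
    have hScard : S.ncard = s := by
      rw [hS, Set.ncard_insert_of_notMem hzc (Set.finite_range c), hrange]
      omega
    have hSsub : S ⊆ M.E := by
      rw [hS]
      refine insert_subset hzW.1 ?_
      rintro x ⟨i, rfl⟩
      exact hCsSub i (hc i)
    obtain ⟨C, hCcirc, hCcard, hSC⟩ := hcirc S hSsub hScard
    have hCfin : C.Finite := hCcirc.finite hE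
    have hCnonempty : ∀ i, (C ∩ Cs i).Nonempty :=
      fun i => ⟨c i, hSC (Or.inr ⟨i, rfl⟩), hc i⟩
    have hC2 : ∀ i, 2 ≤ (C ∩ Cs i).ncard :=
      fun i => circuit_cocircuit_two_le hCcirc (hCs i).1 hE (hCnonempty i)
    have hcount := partition_count M hE Cs hCsdisj hCsSub C hCcirc.subset_ground
    rw [← hU, ← hW, hCcard] at hcount
    have hsumge : 2 * (s - 1) ≤ ∑ i, (C ∩ Cs i).ncard := by
      refine le_trans ?_ (Finset.card_nsmul_le_sum Finset.univ _ 2 (fun i _ => hC2 i))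
      simp [smul_eq_mul, mul_comm]
    have hCWle : (C ∩ W).ncard ≤ 2 := by omega
    have hzCW : z ∈ C ∩ W := ⟨hSC (Or.inl rfl), hzW⟩
    have hCWpos : 1 ≤ (C ∩ W).ncard := by
      have hne : (C ∩ W).Nonempty := ⟨z, hzCW⟩
      have := hne.ncard_pos (hCfin.inter_of_left W)
      omega
    interval_cases h : (C ∩ W).ncard
    · -- C ∩ W = {z} : z is in the closure of U
      obtain ⟨a, ha⟩ := Set.ncard_eq_one.1 h
      have hza : z = a := by
        have := ha ▸ hzCW
        simpa using this
      subst hza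
      have hsub : C \ {z} ⊆ U := by
        rintro x ⟨hxC, hxz⟩
        by_contra hxU
        have hxW : x ∈ W := ⟨hCcirc.subset_ground hxC, hxU⟩
        have : x ∈ C ∩ W := ⟨hxC, hxW⟩
        rw [ha] at this
        exact hxz this
      exact M.closure_subset_closure hsub (hCcirc.mem_closure_diff_singleton hzCW.1)
    · -- C ∩ W = {z, z'} : z would be in Z, contradiction
      exfalso
      obtain ⟨a, b, hab, hCW⟩ := Set.ncard_eq_two.1 h
      have hzmem : z = a ∨ z = b := by
        have := hCW ▸ hzCW
        simpa using this
      have hZmem : z ∈ Z := by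
        rcases hzmem with rfl | rfl
        · refine ⟨hzW, b, C, ?_, hab.symm, hCcirc, hCcard, hCW, hCnonempty⟩
          have : b ∈ C ∩ W := hCW ▸ (Or.inr rfl)
          exact this.2
        · refine ⟨hzW, a, C, ?_, hab, hCcirc, hCcard, ?_, hCnonempty⟩
          · have : a ∈ C ∩ W := hCW ▸ (Or.inl rfl)
            exact this.2
          · rw [hCW, Set.pair_comm]
      exact hzZ hZmem
  -- rank bounds
  have hEsub : M.E ⊆ W ∪ U := by
    intro x hx
    by_cases hxU : x ∈ U
    · exact Or.inr hxU
    · exact Or.inl ⟨hx, hxU⟩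
  have hrkW : M.rk' M.E ≤ M.rk' W + M.rk' U :=
    le_trans (M.rk'_mono hE hEsub) (M.rk'_union_le hE W U)
  have hrkZ : M.rk' W ≤ M.rk' Z + M.rk' U := by
    have hWsub : W ⊆ Z ∪ (W \ Z) := by
      intro x hx
      by_cases hxZ : x ∈ Z
      · exact Or.inl hxZ
      · exact Or.inr ⟨hx, hxZ⟩
    refine le_trans (M.rk'_mono hE hWsub) (le_trans (M.rk'_union_le hE _ _) ?_)
    refine Nat.add_le_add le_rfl ?_
    refine M.rk'_le_of_subset_closure hE ?_
    intro x hx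
    exact hbad x hx.1 hx.2
  have hrkU : M.rk' U ≤ 2 * t * (s - 1) := le_trans (M.rk'_le_ncard hE U hUfin) hUcard
  have hdual' : M.E.ncard ≤ 2 * M.rk' M.E := by
    have hsum := M.rk'_ground_add_dual hE
    have : M✶.rk' M✶.E = M✶.rk' M.E := by rw [dual_ground]
    omega
  have hEcard : 2 * q + 8 * t * s ≤ M.E.ncard := by
    simp only [Prod.fst, Prod.snd] at hcard
    omega
  have hts : 2 * t * (s - 1) ≤ 2 * t * s := Nat.mul_le_mul_left _ (by omega)
  have hq' : q ≤ M.rk' Z := by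
    have h8 : 8 * t * s = 4 * (2 * t * s) := by ring
    omega
  -- final assembly
  refine ⟨Cs, hCsdisj, hCs, Z, hZW, hq', ?_⟩
  intro z hzZ
  obtain ⟨hzW, z', C, hz'W, hz'ne, hCcirc, hCcard, hCW, hCne⟩ := hzZ
  have hz'Z : z' ∈ Z := by
    refine ⟨hz'W, z, C, hzW, hz'ne.symm, hCcirc, hCcard, ?_, hCne⟩
    rw [hCW, Set.pair_comm]
  have hzC : z ∈ C := by
    have : z ∈ C ∩ W := hCW ▸ (Or.inl rfl : z ∈ ({z, z'} : Set α))
    exact this.1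
  have hz'C : z' ∈ C := by
    have : z' ∈ C ∩ W := hCW ▸ (Or.inr rfl : z' ∈ ({z, z'} : Set α))
    exact this.1
  refine ⟨z', ⟨hz'Z, by simpa using hz'ne⟩, C, hCcirc, hCcard, ?_, ?_⟩
  · exact insert_subset hzC (singleton_subset_iff.2 hz'C)
  · have hC2 : ∀ i, 2 ≤ (C ∩ Cs i).ncard :=
      fun i => circuit_cocircuit_two_le hCcirc (hCs i).1 hE (hCne i)
    have hcount := partition_count M hE Cs hCsdisj hCsSub C hCcirc.subset_ground
    rw [← hU, ← hW, hCcard, hCW] at hcount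
    have hpairz : ({z, z'} : Set α).ncard = 2 := Set.ncard_pair (fun h => hz'ne h.symm)
    rw [hpairz] at hcount
    have hsum : ∑ i, (C ∩ Cs i).ncard = 2 * (s - 1) := by omega
    exact all_eq_two _ hC2 hsum

end Assembly


universe u

open Matroid

/-- There is a function `g : ℕ³ → ℕ` such that any (finite) matroid `M` with the
`(s,2s,t,2t)`-property, `r(M) ≥ r⋆(M)` and `|E(M)| ≥ g(s,t,q)` has `s − 1` pairwise disjoint
`2t`-element cocircuits `Cs 1, …, Cs (s−1)` and a set `Z ⊆ E(M) − ⋃ᵢ Cs i` with `r(Z) ≥ q`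
such that every `z ∈ Z` forms, with some `z' ∈ Z − {z}`, a pair contained in a `2s`-element
circuit meeting each `Cs i` in exactly two elements. -/
theorem statement9 :
    ∃ g : ℕ × ℕ × ℕ → ℕ, ∀ (s t q : ℕ), 0 < s → 0 < t → 0 < q →
      ∀ {α : Type u} (M : Matroid α), M.E.Finite →
        M.HasProp s (2 * s) t (2 * t) → M✶.rk' M.E ≤ M.rk' M.E →
        g (s, t, q) ≤ M.E.ncard →
        ∃ Cs : Fin (s - 1) → Set α, Pairwise (Function.onFun Disjoint Cs) ∧
          (∀ i, M.IsCocircuit' (Cs i) ∧ (Cs i).ncard = 2 * t) ∧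
          ∃ Z ⊆ M.E \ ⋃ i, Cs i, q ≤ M.rk' Z ∧
            ∀ z ∈ Z, ∃ z' ∈ Z \ {z}, ∃ C, M.IsCircuit' C ∧ C.ncard = 2 * s ∧
              {z, z'} ⊆ C ∧ ∀ i, (C ∩ Cs i).ncard = 2 := by
  exact statement9_main
end

section
/- Let s and t be positive integers and let M be an (s,t)-spike with associated partition (A_1,…,A_m). Then m ≥ s + t − 1. -/
open Set Function

universe u

open Matroid


section Aux

open Set

lemma aux_encard_biUnion {α : Type u} {m : ℕ} (A : Fin m → Set α)
    (hd : Pairwise (Function.onFun Disjoint A)) (h2 : ∀ i, (A i).encard = 2)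
    (I : Finset (Fin m)) : (⋃ i ∈ I, A i).encard = 2 * I.card := by
  classical
  induction I using Finset.induction_on with
  | empty => simp
  | @insert a I ha ih =>
    rw [Finset.set_biUnion_insert, Set.encard_union_eq, ih, h2,
      Finset.card_insert_of_notMem ha]
    · push_cast
      ring
    · exact Set.disjoint_iUnion₂_right.2 fun i hi ↦ hd (fun h ↦ ha (h ▸ hi))

/-- A circuit of size `n > 0` forces every base to have size at least `n - 1`. -/
lemma aux_base_card {α : Type u} (M : Matroid α) {C B : Set α}
    (hC : M.IsCircuit' C) (hCne : C.Nonempty) (hB : M.IsBase B) :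
    C.encard ≤ B.encard + 1 := by
  obtain ⟨e, he⟩ := hCne
  have hIndep : M.Indep (C \ {e}) := by
    by_contra hdep
    have hdep' : M.Dep (C \ {e}) :=
      ⟨hdep, diff_subset.trans hC.prop.subset_ground⟩
    have := hC.2 hdep' diff_subset
    exact (this he).2 rfl
  obtain ⟨B', hB', hsub⟩ := hIndep.exists_isBase_superset
  calc C.encard = (C \ {e}).encard + 1 := (Set.encard_diff_singleton_add_one he).symm
    _ ≤ B'.encard + 1 := by gcongr
    _ = B.encard + 1 := by rw [hB'.encard_eq_encard_of_isBase hB]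

end Aux

/-- An `(s,t)`-spike with associated partition `(A 1, …, A m)` satisfies
`m ≥ s + t − 1`. -/
theorem statement12 {α : Type u} (s t m : ℕ) (hs : 0 < s) (ht : 0 < t)
    (M : Matroid α) (A : Fin m → Set α) (hA : M.IsSpike s t A) :
    s + t - 1 ≤ m := by
    classical
  obtain ⟨hmax, hE, hdisj, hcard2, hcirc, hcocirc⟩ := hA
  have hsm : s ≤ m := le_trans (le_max_left s t) hmax
  have htm : t ≤ m := le_trans (le_max_right s t) hmax
  -- each pair has encard 2
  have h2 : ∀ i, (A i).encard = 2 := by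
    intro i
    have := hcard2 i
    obtain ⟨a, b, hab, h⟩ := Set.ncard_eq_two.1 this
    rw [h, Set.encard_pair hab]
  -- pick a base
  obtain ⟨B, hB⟩ := M.exists_isBase
  -- circuit of size 2s
  obtain ⟨I, -, hI⟩ := Finset.exists_subset_card_eq (show s ≤ (Finset.univ : Finset (Fin m)).card by simpa using hsm)
  have hC := hcirc I hI
  have hCcard : (⋃ i ∈ I, A i).encard = 2 * s := by
    rw [aux_encard_biUnion A hdisj h2, hI]
  have hCne : (⋃ i ∈ I, A i).Nonempty := by
    rw [← Set.encard_pos, hCcard]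
    exact_mod_cast Nat.mul_pos (by norm_num) hs
  have hCB : ((2 * s : ℕ) : ℕ∞) ≤ B.encard + 1 := by
    have := aux_base_card M hC hCne hB
    rw [hCcard] at this
    exact_mod_cast this
  -- cocircuit of size 2t
  obtain ⟨J, -, hJ⟩ := Finset.exists_subset_card_eq (show t ≤ (Finset.univ : Finset (Fin m)).card by simpa using htm)
  have hC' := hcocirc J hJ
  have hC'card : (⋃ i ∈ J, A i).encard = 2 * t := by
    rw [aux_encard_biUnion A hdisj h2, hJ]
  have hC'ne : (⋃ i ∈ J, A i).Nonempty := by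
    rw [← Set.encard_pos, hC'card]
    exact_mod_cast Nat.mul_pos (by norm_num) ht
  have hBd : M✶.IsBase (M.E \ B) := hB.compl_isBase_dual
  have hC'B : ((2 * t : ℕ) : ℕ∞) ≤ (M.E \ B).encard + 1 := by
    have := aux_base_card M✶ hC' hC'ne hBd
    rw [hC'card] at this
    exact_mod_cast this
  -- ground set has encard 2m
  have hEcard : M.E.encard = 2 * m := by
    rw [← hE]
    have : (⋃ i, A i) = ⋃ i ∈ (Finset.univ : Finset (Fin m)), A i := by simp
    rw [this, aux_encard_biUnion A hdisj h2]
    simp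
  have hsplit : (M.E \ B).encard + B.encard = M.E.encard :=
    Set.encard_diff_add_encard_of_subset hB.subset_ground
  have hfinal : ((2 * s + 2 * t : ℕ) : ℕ∞) ≤ ((2 * m + 2 : ℕ) : ℕ∞) := by
    push_cast
    calc ((2 * s : ℕ∞)) + 2 * t ≤ (B.encard + 1) + ((M.E \ B).encard + 1) := by
          push_cast at hCB hC'B; exact add_le_add hCB hC'B
      _ = ((M.E \ B).encard + B.encard) + 2 := by ring
      _ = 2 * m + 2 := by rw [hsplit, hEcard]
  have := (Nat.cast_le (α := ℕ∞)).1 hfinal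
  omega
end

section
/- Let s and t be positive integers and let M be an (s,t)-spike of order m. Then r(M) = m + s − t and r*(M) = m − s + t, where r* denotes the rank of the dual matroid. -/
open Set Function

universe u

open Matroid

namespace SpikeAux

open Set Function

variable {α : Type u} {M : Matroid α} {C X : Set α} {e : α}

lemma circ_indep_of_ssubset (h : M.IsCircuit' C) (hX : X ⊂ C) : M.Indep X := by
  have hXE : X ⊆ M.E := hX.subset.trans h.prop.subset_ground
  by_contra hi
  exact hX.ne (hX.subset.antisymm (h.2 ⟨hi, hXE⟩ hX.subset))

lemma circ_mem_closure_diff (h : M.IsCircuit' C) (he : e ∈ C) :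
    e ∈ M.closure (C \ {e}) := by
  have hI : M.Indep (C \ {e}) := circ_indep_of_ssubset h (Set.diff_singleton_ssubset.mpr he)
  by_contra hecl
  have hind : M.Indep (insert e (C \ {e})) := by
    rw [hI.insert_indep_iff]
    exact Or.inl ⟨h.prop.subset_ground he, hecl⟩
  rw [insert_diff_singleton, insert_eq_of_mem he] at hind
  exact h.prop.not_indep hind

variable {s t m : ℕ} {A : Fin m → Set α}

lemma arms_finite (h4 : ∀ i, (A i).ncard = 2) (i : Fin m) : (A i).Finite := by
  obtain ⟨a, b, _, hab⟩ := Set.ncard_eq_two.mp (h4 i)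
  rw [hab]
  exact (Set.finite_singleton b).insert a

lemma bUnion_arms_finite (h4 : ∀ i, (A i).ncard = 2) (I : Finset (Fin m)) :
    (⋃ i ∈ I, A i).Finite :=
  (Set.finite_iUnion (arms_finite h4)).subset
    (Set.iUnion₂_subset fun i _ => Set.subset_iUnion A i)

lemma arms_ncard (h3 : Pairwise (Function.onFun Disjoint A)) (h4 : ∀ i, (A i).ncard = 2)
    (I : Finset (Fin m)) : (⋃ i ∈ I, A i).ncard = 2 * I.card := by
  classical
  induction I using Finset.induction_on with
  | empty => simp
  | insert j I' hj ih =>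
    have hdisj : Disjoint (A j) (⋃ i ∈ I', A i) := by
      simp only [Set.disjoint_iUnion_right]
      intro i hi
      exact h3 (fun hij => hj (hij ▸ hi))
    rw [Finset.set_biUnion_insert,
      Set.ncard_union_eq hdisj (arms_finite h4 j) (bUnion_arms_finite h4 I'), ih,
      Finset.card_insert_of_notMem hj, h4 j]
    ring

lemma compl_arms (h3 : Pairwise (Function.onFun Disjoint A)) (T : Finset (Fin m)) :
    (⋃ i, A i) \ (⋃ i ∈ T, A i) = ⋃ i ∈ Finset.univ \ T, A i := by
  ext z
  simp only [Set.mem_diff, Set.mem_iUnion, Finset.mem_sdiff, Finset.mem_univ, true_and,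
    exists_prop, not_exists]
  constructor
  · rintro ⟨⟨i, hzi⟩, hz⟩
    exact ⟨i, fun hiT => hz i ⟨hiT, hzi⟩, hzi⟩
  · rintro ⟨i, hiT, hzi⟩
    refine ⟨⟨i, hzi⟩, fun j hj => hiT ?_⟩
    obtain ⟨hjT, hzj⟩ := hj
    rcases eq_or_ne i j with rfl | hij
    · exact hjT
    · exact absurd hzj (Set.disjoint_left.mp (h3 hij) hzi)

lemma rk'_eq_ncard_base (hE : M.E.Finite) {B : Set α} (hB : M.IsBase B) :
    M.rk' M.E = B.ncard := by
  apply le_antisymm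
  · refine csSup_le ⟨0, ∅, M.empty_indep, empty_subset _, by simp⟩ ?_
    rintro n ⟨I, hI, hIE, rfl⟩
    obtain ⟨B', hB', hIB'⟩ := hI.exists_isBase_superset
    exact (Set.ncard_le_ncard hIB' (hE.subset hB'.subset_ground)).trans_eq
      (hB'.ncard_eq_ncard_of_isBase hB)
  · refine le_csSup ⟨M.E.ncard, ?_⟩ ⟨B, hB.indep, hB.subset_ground, rfl⟩
    rintro n ⟨I, _, hIE, rfl⟩
    exact Set.ncard_le_ncard hIE hE

lemma rk'_le_ncard_of_spanning (hE : M.E.Finite) {S : Set α} (hS : M.Spanning S) :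
    M.rk' M.E ≤ S.ncard := by
  obtain ⟨B, hB, hBS⟩ := hS.exists_isBase_subset
  rw [rk'_eq_ncard_base hE hB]
  exact Set.ncard_le_ncard hBS (hE.subset hS.subset_ground)

lemma rk'_add_dual (hE : M.E.Finite) : M.rk' M.E + M✶.rk' M.E = M.E.ncard := by
  obtain ⟨B, hB⟩ := M.exists_isBase
  have hB' := hB.compl_isBase_dual
  have hE' : M✶.E.Finite := by rwa [dual_ground]
  have h2 : M✶.rk' M.E = (M.E \ B).ncard := by
    have h := rk'_eq_ncard_base hE' hB'
    rwa [dual_ground] at h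
  rw [rk'_eq_ncard_base hE hB, h2, add_comm]
  exact Set.ncard_diff_add_ncard_of_subset hB.subset_ground hE

lemma IsSpike.dual' (hA : M.IsSpike s t A) : M✶.IsSpike t s A := by
  obtain ⟨h1, h2, h3, h4, h5, h6⟩ := hA
  refine ⟨by rwa [max_comm], by rwa [dual_ground], h3, h4, h6, fun I hI => ?_⟩
  show M✶✶.IsCircuit' _
  rw [Matroid.dual_dual]
  exact h5 I hI

lemma spike_spanning_compl (hA : M.IsSpike s t A) {T : Finset (Fin m)} (hT : T.card = t)
    (he : e ∈ ⋃ i ∈ T, A i) :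
    M.Spanning ((⋃ i ∈ Finset.univ \ T, A i) ∪ {e}) := by
  obtain ⟨h1, h2, h3, h4, h5, h6⟩ := hA
  have hCc : M✶.IsCircuit' (⋃ i ∈ T, A i) := h6 T hT
  have hCsE : (⋃ i ∈ T, A i) ⊆ M.E := by
    have h := hCc.prop.subset_ground
    rwa [dual_ground] at h
  have hiE : ∀ i, A i ⊆ M.E := fun i => (Set.subset_iUnion A i).trans h2.subset
  have hS_sub : (⋃ i ∈ Finset.univ \ T, A i) ∪ {e} ⊆ M.E :=
    union_subset (Set.iUnion₂_subset fun i _ => hiE i)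
      (singleton_subset_iff.mpr (hCsE he))
  rw [spanning_iff_compl_coindep hS_sub]
  have hH : M.E \ (⋃ i ∈ T, A i) = ⋃ i ∈ Finset.univ \ T, A i := by
    rw [← h2]; exact compl_arms h3 T
  have hcompl : M.E \ ((⋃ i ∈ Finset.univ \ T, A i) ∪ {e}) = (⋃ i ∈ T, A i) \ {e} := by
    rw [← hH]
    ext z
    simp only [Set.mem_diff, Set.mem_union, Set.mem_singleton_iff, not_or, not_and, not_not]
    constructor
    · rintro ⟨hzE, hz1, hz2⟩
      exact ⟨hz1 hzE, hz2⟩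
    · rintro ⟨hzC, hz2⟩
      exact ⟨hCsE hzC, fun _ => hzC, hz2⟩
  rw [hcompl]
  show M✶.Indep _
  exact circ_indep_of_ssubset hCc (Set.diff_singleton_ssubset.mpr he)

lemma spike_rk_le_one (hA : M.IsSpike s t A) (ht : 0 < t) (hE : M.E.Finite) :
    M.rk' M.E + 2 * t ≤ 2 * m + 1 := by
  have htm : t ≤ m := le_trans (le_max_right s t) hA.1
  obtain ⟨T, hTsub, hTcard⟩ := Finset.exists_subset_card_eq (s := (Finset.univ : Finset (Fin m))) (n := t)
    (by simp only [Finset.card_univ, Fintype.card_fin]; exact htm)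
  obtain ⟨i0, hi0⟩ := Finset.card_pos.mp (by rw [hTcard]; exact ht)
  obtain ⟨a, b, hab, hAi⟩ := Set.ncard_eq_two.mp (hA.2.2.2.1 i0)
  have he : a ∈ ⋃ i ∈ T, A i :=
    Set.mem_iUnion₂.mpr ⟨i0, hi0, by rw [hAi]; exact Set.mem_insert _ _⟩
  have hsp := spike_spanning_compl hA hTcard he
  have hcard : ((⋃ i ∈ Finset.univ \ T, A i) ∪ {a}).ncard ≤ 2 * (m - t) + 1 := by
    refine le_trans (Set.ncard_union_le _ _) ?_
    rw [arms_ncard hA.2.2.1 hA.2.2.2.1, Set.ncard_singleton, Finset.card_sdiff_of_subset hTsub,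
      Finset.card_univ, Fintype.card_fin, hTcard]
  have hrk := rk'_le_ncard_of_spanning hE hsp
  omega

lemma spike_rk_le_two (hA : M.IsSpike s t A) (hs : 0 < s) (ht : 0 < t) (hE : M.E.Finite)
    (hm : s + t ≤ m + 1) : M.rk' M.E + t ≤ m + s := by
  classical
  obtain ⟨h1, h2, h3, h4, h5, h6⟩ := hA
  choose x y hxy hAxy using fun i => Set.ncard_eq_two.mp (h4 i)
  have htm : t ≤ m := le_trans (le_max_right s t) h1
  obtain ⟨T, hTsub, hTcard⟩ := Finset.exists_subset_card_eq (s := (Finset.univ : Finset (Fin m))) (n := t)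
    (by simp only [Finset.card_univ, Fintype.card_fin]; exact htm)
  have hTc : (Finset.univ \ T).card = m - t := by
    rw [Finset.card_sdiff_of_subset hTsub, Finset.card_univ, Fintype.card_fin, hTcard]
  obtain ⟨K, hKsub, hKcard⟩ := Finset.exists_subset_card_eq (s := Finset.univ \ T) (n := s - 1)
    (by rw [hTc]; omega)
  set R : Finset (Fin m) := (Finset.univ \ T) \ K with hR
  obtain ⟨i0, hi0⟩ := Finset.card_pos.mp (by rw [hTcard]; exact ht)
  have heC : x i0 ∈ ⋃ i ∈ T, A i :=
    Set.mem_iUnion₂.mpr ⟨i0, hi0, by rw [hAxy i0]; exact Set.mem_insert _ _⟩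
  set S : Set α := (⋃ i ∈ K, A i) ∪ (x '' ↑R) ∪ {x i0} with hSdef
  have hiE : ∀ i, A i ⊆ M.E := fun i => (Set.subset_iUnion A i).trans h2.subset
  have hxE : ∀ i, x i ∈ A i := fun i => by rw [hAxy i]; exact Set.mem_insert _ _
  have hyE : ∀ i, y i ∈ A i := fun i => by
    rw [hAxy i]; exact Set.mem_insert_of_mem _ rfl
  have hSE : S ⊆ M.E := by
    refine union_subset (union_subset (Set.iUnion₂_subset fun i _ => hiE i) ?_) ?_
    · rintro z ⟨i, _, rfl⟩
      exact hiE i (hxE i)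
    · exact singleton_subset_iff.mpr (hiE i0 (hxE i0))
  have hsp0 := spike_spanning_compl ⟨h1, h2, h3, h4, h5, h6⟩ hTcard heC
  have hsub_cl : (⋃ i ∈ Finset.univ \ T, A i) ∪ {x i0} ⊆ M.closure S := by
    refine union_subset (Set.iUnion₂_subset fun i hi => ?_) ?_
    · by_cases hiK : i ∈ K
      · exact fun z hz =>
          M.subset_closure S hSE (Or.inl (Or.inl (Set.mem_iUnion₂.mpr ⟨i, hiK, hz⟩)))
      · have hiR : i ∈ R := Finset.mem_sdiff.mpr ⟨hi, hiK⟩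
        have hxS : x i ∈ S := Or.inl (Or.inr ⟨i, hiR, rfl⟩)
        have hsubS : (⋃ j ∈ K, A j) ∪ {x i} ⊆ S :=
          union_subset (fun w hw => Or.inl (Or.inl hw)) (singleton_subset_iff.mpr hxS)
        have hcard' : (insert i K).card = s := by
          rw [Finset.card_insert_of_notMem hiK, hKcard]; omega
        have hC := h5 _ hcard'
        have hyi : y i ∈ M.closure ((⋃ j ∈ K, A j) ∪ {x i}) := by
          have hmem : y i ∈ ⋃ j ∈ insert i K, A j :=
            Set.mem_iUnion₂.mpr ⟨i, Finset.mem_insert_self i K, hyE i⟩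
          refine M.closure_subset_closure ?_ (circ_mem_closure_diff hC hmem)
          rintro z ⟨hz, hzne⟩
          simp only [Set.mem_singleton_iff] at hzne
          obtain ⟨j, hj, hzj⟩ := Set.mem_iUnion₂.mp hz
          rcases Finset.mem_insert.mp hj with rfl | hjK
          · rw [hAxy j] at hzj
            rcases hzj with rfl | hzj
            · exact Or.inr rfl
            · exact absurd (Set.mem_singleton_iff.mp hzj) hzne
          · exact Or.inl (Set.mem_iUnion₂.mpr ⟨j, hjK, hzj⟩)
        intro z hz
        rw [hAxy i] at hz
        rcases hz with rfl | hz
        · exact M.subset_closure S hSE hxS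
        · rw [Set.mem_singleton_iff.mp hz]
          exact M.closure_subset_closure hsubS hyi
    · exact singleton_subset_iff.mpr (M.subset_closure S hSE (Or.inr rfl))
  have hsp : M.Spanning S := by
    rw [spanning_iff_closure_eq hSE]
    refine (M.closure_subset_ground S).antisymm ?_
    have h0 : M.closure ((⋃ i ∈ Finset.univ \ T, A i) ∪ {x i0}) = M.E :=
      (spanning_iff_closure_eq hsp0.subset_ground).mp hsp0
    rw [← h0]
    exact closure_subset_closure_of_subset_closure hsub_cl
  have hc1 : (⋃ i ∈ K, A i).ncard = 2 * K.card := arms_ncard h3 h4 K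
  have hc2 : (x '' ↑R).ncard ≤ R.card := by
    refine le_trans (Set.ncard_image_le R.finite_toSet) ?_
    rw [Set.ncard_coe_finset]
  have hcS : S.ncard ≤ 2 * K.card + R.card + 1 := by
    refine le_trans (Set.ncard_union_le _ _) ?_
    have h' := Set.ncard_union_le (⋃ i ∈ K, A i) (x '' ↑R)
    rw [Set.ncard_singleton]
    omega
  have hRcard : R.card = m - t - (s - 1) := by
    rw [hR, Finset.card_sdiff_of_subset hKsub, hTc, hKcard]
  have hrk := rk'_le_ncard_of_spanning hE hsp
  omega

end SpikeAux

/-- An `(s,t)`-spike of order `m` satisfies `r(M) = m + s − t` and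
`r⋆(M) = m − s + t`. -/
theorem statement13 {α : Type u} (s t m : ℕ) (hs : 0 < s) (ht : 0 < t)
    (M : Matroid α) (A : Fin m → Set α) (hA : M.IsSpike s t A) :
    M.rk' M.E = m + s - t ∧ M✶.rk' M.E = m - s + t := by
  open SpikeAux in
  have h1 := hA.1
  have h2 := hA.2.1
  have h3 := hA.2.2.1
  have h4 := hA.2.2.2.1
  have hsm : s ≤ m := le_trans (le_max_left s t) h1
  have htm : t ≤ m := le_trans (le_max_right s t) h1
  have hE : M.E.Finite := by
    rw [← h2]
    exact Set.finite_iUnion (SpikeAux.arms_finite h4)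
  have hEncard : M.E.ncard = 2 * m := by
    rw [← h2, show (⋃ i, A i) = ⋃ i ∈ Finset.univ, A i by simp,
      SpikeAux.arms_ncard h3 h4, Finset.card_univ, Fintype.card_fin]
  have hdual := SpikeAux.IsSpike.dual' hA
  have hE' : M✶.E.Finite := by rwa [Matroid.dual_ground]
  have hsum := SpikeAux.rk'_add_dual hE
  have hU1 := SpikeAux.spike_rk_le_one hA ht hE
  have hU1' := SpikeAux.spike_rk_le_one hdual hs hE'
  rw [Matroid.dual_ground] at hU1'
  by_cases hm : s + t ≤ m + 1
  · have hU2 := SpikeAux.spike_rk_le_two hA hs ht hE hm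
    have hU2' := SpikeAux.spike_rk_le_two hdual ht hs hE' (by omega)
    rw [Matroid.dual_ground] at hU2'
    omega
  · omega
end
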